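/- Let Λ be a finitely generated commutative monoid and S a Λ-graded commutative k-algebra with each homogeneous component S(λ) finite-dimensional over k and with S(λ)S(μ) spanning S(λ+μ). Then S is a finitely generated k-algebra. -/

import Mathlib

/-- a `Λ`-graded commutative `k`-algebra with `Λ` a finitely generated
commutative monoid, finite-dimensional homogeneous components, and `A λ · A μ` spanning
`A (λ+μ)`, is a finitely generated `k`-algebra. -/
theorem stmt10 {k S Λ : Type*} [Field k] [AddCommMonoid Λ] [DecidableEq Λ] [AddMonoid.FG Λ]
    [CommRing S] [Algebra k S]
    (A : Λ → Submodule k S) (hint : DirectSum.IsInternal A)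
    (hfin : ∀ l : Λ, FiniteDimensional k (A l))
    (hmul : ∀ l m : Λ, A l * A m = A (l + m)) :
    Algebra.FiniteType k S := by
  obtain ⟨T, hT⟩ := AddMonoid.fg_def.mp (inferInstance : AddMonoid.FG Λ)
  have hspan : ∀ l : Λ, ∃ b : Finset S, Submodule.span k (b : Set S) = A l := fun l =>
    ((Submodule.fg_iff_finiteDimensional (A l)).2 (hfin l))
  choose b hb using hspan
  classical
  set T' : Finset Λ := insert 0 T with hT'
  let s : Finset S := T'.biUnion b
  refine ⟨⟨s, ?_⟩⟩
  have hsub : ∀ l ∈ T', A l ≤ Subalgebra.toSubmodule (Algebra.adjoin k (s : Set S)) := by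
    intro l hl
    rw [← hb l, Submodule.span_le]
    intro x hx
    exact Algebra.subset_adjoin (Finset.mem_coe.2 (Finset.mem_biUnion.2 ⟨l, hl, hx⟩))
  have key : ∀ l : Λ, A l ≤ Subalgebra.toSubmodule (Algebra.adjoin k (s : Set S)) := by
    intro l
    have hmem : l ∈ AddSubmonoid.closure (T : Set Λ) := by
      rw [hT]; trivial
    induction hmem using AddSubmonoid.closure_induction with
    | mem x hx => exact hsub x (Finset.mem_insert_of_mem hx)
    | zero => exact hsub 0 (Finset.mem_insert_self 0 T)
    | add x y _ _ hx hy =>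
      rw [← hmul x y]
      refine Submodule.mul_le.2 fun a ha c hc => ?_
      exact (Algebra.adjoin k (s : Set S)).mul_mem (hx ha) (hy hc)
  rw [eq_top_iff]
  intro x _
  have hx : x ∈ ⨆ l, A l := by
    rw [hint.submodule_iSup_eq_top]; trivial
  exact (iSup_le key) hx
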